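/- Let M ∈ ℝ^{d×d} be symmetric positive definite with eigenvalues λ₁(M) ≤ ... ≤ λ_d(M), and suppose there exists an integer s ∈ {1,...,d−1} with λ_{s+1}(M) ≥ λ₁(M) + 1. Perform s greedy rank-one updates: M⁽⁰⁾ = M, z_t = argmax_{‖z‖≤1} zᵀ(M⁽ᵗ⁻¹⁾)⁻¹z, M⁽ᵗ⁾ = M⁽ᵗ⁻¹⁾ + z_t z_tᵀ for t = 1,...,s. Then λ_min(M⁽ˢ⁾) ≥ λ_min(M) + 1. -/

import Mathlib

open Matrix

section Stmt2Aux
variable {d : ℕ}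


lemma aux_dot_sum (v : Fin d → ℝ) (f : Fin d → Fin d → ℝ) :
    v ⬝ᵥ (∑ i, f i) = ∑ i, v ⬝ᵥ f i := by
  simp [dotProduct, Finset.sum_apply, Finset.mul_sum]
  exact Finset.sum_comm

lemma aux_mulVec_sum (A : Matrix (Fin d) (Fin d) ℝ) (f : Fin d → Fin d → ℝ) :
    A.mulVec (∑ i, f i) = ∑ i, A.mulVec (f i) := by
  ext k
  simp [mulVec, dotProduct, Finset.sum_apply, Finset.mul_sum]
  exact Finset.sum_comm

lemma aux_expand_eq (p : Fin d → Fin d → ℝ)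
    (hp : ∀ i j, p i ⬝ᵥ p j = if i = j then (1:ℝ) else 0)
    (v : Fin d → ℝ) : v = ∑ i, (v ⬝ᵥ p i) • p i := by
  have hPPT : (Matrix.of p) * (Matrix.of p)ᵀ = 1 := by
    ext i j
    simpa [Matrix.mul_apply, dotProduct, Matrix.one_apply] using hp i j
  have hPTP := mul_eq_one_comm.mp hPPT
  have h1 : ∀ l k, (∑ i, p i l * p i k) = if l = k then (1:ℝ) else 0 := by
    intro l k
    have := congrFun (congrFun hPTP l) k
    simpa [Matrix.mul_apply, Matrix.transpose_apply, Matrix.one_apply] using this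
  funext k
  have : ∑ i, (v ⬝ᵥ p i) * p i k = v k := by
    calc ∑ i, (v ⬝ᵥ p i) * p i k = ∑ i, ∑ l, v l * (p i l * p i k) := by
          simp [dotProduct, Finset.sum_mul, mul_assoc]
      _ = ∑ l, v l * ∑ i, p i l * p i k := by
          rw [Finset.sum_comm]; simp [Finset.mul_sum]
      _ = v k := by simp [h1]
  simpa [Finset.sum_apply] using this.symm

lemma aux_quad_eq (A : Matrix (Fin d) (Fin d) ℝ) (ρ : Fin d → ℝ) (p : Fin d → Fin d → ℝ)
    (heig : ∀ i, A.mulVec (p i) = ρ i • p i)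
    (hp : ∀ i j, p i ⬝ᵥ p j = if i = j then (1:ℝ) else 0)
    (v : Fin d → ℝ) : v ⬝ᵥ A.mulVec v = ∑ i, ρ i * (v ⬝ᵥ p i) ^ 2 := by
  have hv := aux_expand_eq p hp v
  calc v ⬝ᵥ A.mulVec v = v ⬝ᵥ A.mulVec (∑ i, (v ⬝ᵥ p i) • p i) := by rw [← hv]
    _ = v ⬝ᵥ (∑ i, (v ⬝ᵥ p i) • A.mulVec (p i)) := by
        rw [aux_mulVec_sum]
        congr 1
        exact Finset.sum_congr rfl fun i _ => by rw [mulVec_smul]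
    _ = ∑ i, (v ⬝ᵥ p i) * (v ⬝ᵥ (ρ i • p i)) := by
        rw [aux_dot_sum]
        refine Finset.sum_congr rfl fun i _ => ?_
        simp only [heig, dotProduct_smul, smul_eq_mul]
        try ring
    _ = ∑ i, ρ i * (v ⬝ᵥ p i) ^ 2 := by
        refine Finset.sum_congr rfl fun i _ => ?_
        rw [dotProduct_smul]
        simp only [smul_eq_mul]; ring

lemma aux_norm_eq (p : Fin d → Fin d → ℝ)
    (hp : ∀ i j, p i ⬝ᵥ p j = if i = j then (1:ℝ) else 0)
    (v : Fin d → ℝ) : v ⬝ᵥ v = ∑ i, (v ⬝ᵥ p i) ^ 2 := by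
  have := aux_quad_eq (1 : Matrix (Fin d) (Fin d) ℝ) (fun _ => 1) p (fun i => by simp) hp v
  simpa using this

lemma aux_quad_ge (A : Matrix (Fin d) (Fin d) ℝ) (ρ : Fin d → ℝ) (p : Fin d → Fin d → ℝ)
    (heig : ∀ i, A.mulVec (p i) = ρ i • p i)
    (hp : ∀ i j, p i ⬝ᵥ p j = if i = j then (1:ℝ) else 0)
    (b : ℝ) (hb : ∀ i, b ≤ ρ i)
    (v : Fin d → ℝ) : b * (v ⬝ᵥ v) ≤ v ⬝ᵥ A.mulVec v := by
  rw [aux_quad_eq A ρ p heig hp v, aux_norm_eq p hp v, Finset.mul_sum]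
  exact Finset.sum_le_sum fun i _ => mul_le_mul_of_nonneg_right (hb i) (sq_nonneg _)

lemma aux_exists_eigen (A : Matrix (Fin d) (Fin d) ℝ) (hA : A.IsHermitian) :
    ∃ (μ : Fin d → ℝ) (p : Fin d → Fin d → ℝ),
      (∀ i, A.mulVec (p i) = μ i • p i) ∧
      (∀ i j, p i ⬝ᵥ p j = if i = j then (1:ℝ) else 0) := by
  refine ⟨hA.eigenvalues, fun i => ⇑(hA.eigenvectorBasis i),
    fun i => hA.mulVec_eigenvectorBasis i, fun i j => ?_⟩
  have h := (orthonormal_iff_ite.mp hA.eigenvectorBasis.orthonormal) i j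
  simpa [PiLp.inner_apply, dotProduct, RCLike.inner_apply, mul_comm] using h

lemma aux_orth_of_ne (A : Matrix (Fin d) (Fin d) ℝ) (hA : Aᵀ = A)
    (u v : Fin d → ℝ) (a b : ℝ)
    (hu : A.mulVec u = a • u) (hv : A.mulVec v = b • v) (hab : a ≠ b) :
    u ⬝ᵥ v = 0 := by
  have h1 : (A.mulVec u) ⬝ᵥ v = u ⬝ᵥ (A.mulVec v) := by
    rw [dotProduct_mulVec, ← mulVec_transpose, hA, dotProduct_comm, dotProduct_mulVec,
      ← mulVec_transpose, hA, dotProduct_comm]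
  rw [hu, hv, smul_dotProduct, dotProduct_smul] at h1
  have : (a - b) * (u ⬝ᵥ v) = 0 := by
    simp only [smul_eq_mul] at h1; ring_nf; linarith [h1]
  rcases mul_eq_zero.mp this with h | h
  · exact absurd (by linarith : a = b) hab
  · exact h

lemma aux_vecMulVec_mulVec (z v : Fin d → ℝ) :
    (vecMulVec z z).mulVec v = (z ⬝ᵥ v) • z := by
  funext k
  simp [vecMulVec, mulVec, dotProduct, Finset.mul_sum, mul_comm, mul_assoc, mul_left_comm]

lemma aux_vecMulVec_herm (z : Fin d → ℝ) : (vecMulVec z z).IsHermitian := by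
  ext i j
  simp [vecMulVec, conjTranspose_apply, mul_comm]

lemma aux_vecMulVec_psd (z : Fin d → ℝ) : (vecMulVec z z).PosSemidef := by
  refine posSemidef_iff_dotProduct_mulVec.mpr ⟨aux_vecMulVec_herm z, fun x => ?_⟩
  rw [aux_vecMulVec_mulVec, dotProduct_smul]
  simp only [star_trivial, smul_eq_mul]
  rw [dotProduct_comm]
  exact mul_self_nonneg _

lemma aux_dot_self_nonneg (v : Fin d → ℝ) : 0 ≤ v ⬝ᵥ v :=
  Finset.sum_nonneg fun i _ => mul_self_nonneg _

lemma aux_inv_eigen (A : Matrix (Fin d) (Fin d) ℝ) (hA : A.PosDef)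
    (μ : ℝ) (p : Fin d → ℝ) (hμ : μ ≠ 0) (h : A.mulVec p = μ • p) :
    A⁻¹.mulVec p = μ⁻¹ • p := by
  have hu : IsUnit A.det := hA.det_pos.ne'.isUnit
  have h2 : A⁻¹.mulVec (A.mulVec p) = p := by
    rw [mulVec_mulVec, Matrix.nonsing_inv_mul A hu, one_mulVec]
  rw [h, mulVec_smul] at h2
  have h3 : μ⁻¹ • (μ • A⁻¹.mulVec p) = μ⁻¹ • p := by rw [h2]
  rw [smul_smul, inv_mul_cancel₀ hμ, one_smul] at h3
  exact h3

lemma aux_eig_pos (A : Matrix (Fin d) (Fin d) ℝ) (hA : A.PosDef)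
    (μ : ℝ) (p : Fin d → ℝ) (hp : p ⬝ᵥ p = 1) (h : A.mulVec p = μ • p) : 0 < μ := by
  have hne : p ≠ 0 := by
    intro h0; rw [h0] at hp; simp [dotProduct] at hp
  have := hA.dotProduct_mulVec_pos hne
  simp only [star_trivial] at this
  rw [h, dotProduct_smul, smul_eq_mul, hp, mul_one] at this
  exact this

lemma aux_greedy_eigen (A : Matrix (Fin d) (Fin d) ℝ) (hA : A.PosDef)
    (μ : Fin d → ℝ) (p : Fin d → Fin d → ℝ)
    (heig : ∀ i, A.mulVec (p i) = μ i • p i)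
    (hp : ∀ i j, p i ⬝ᵥ p j = if i = j then (1:ℝ) else 0)
    (j : Fin d) (hj : ∀ i, μ j ≤ μ i)
    (z : Fin d → ℝ) (hz1 : Real.sqrt (z ⬝ᵥ z) ≤ 1)
    (hzmax : ∀ w : Fin d → ℝ, Real.sqrt (w ⬝ᵥ w) ≤ 1 →
      w ⬝ᵥ A⁻¹.mulVec w ≤ z ⬝ᵥ A⁻¹.mulVec z) :
    A.mulVec z = μ j • z ∧ z ⬝ᵥ z = 1 := by
  have hpnorm : ∀ i, p i ⬝ᵥ p i = 1 := fun i => by simpa using hp i i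
  have hμpos : ∀ i, 0 < μ i := fun i => aux_eig_pos A hA (μ i) (p i) (hpnorm i) (heig i)
  have hinv : ∀ i, A⁻¹.mulVec (p i) = (μ i)⁻¹ • p i :=
    fun i => aux_inv_eigen A hA (μ i) (p i) (hμpos i).ne' (heig i)
  -- z ⬝ z ≤ 1
  have hzz : z ⬝ᵥ z ≤ 1 := by
    have h1 := Real.sq_sqrt (aux_dot_self_nonneg z)
    nlinarith [Real.sqrt_nonneg (z ⬝ᵥ z)]
  -- quadratic form of A⁻¹
  have hq : z ⬝ᵥ A⁻¹.mulVec z = ∑ i, (μ i)⁻¹ * (z ⬝ᵥ p i) ^ 2 :=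
    aux_quad_eq A⁻¹ (fun i => (μ i)⁻¹) p hinv hp z
  have hn : z ⬝ᵥ z = ∑ i, (z ⬝ᵥ p i) ^ 2 := aux_norm_eq p hp z
  -- lower bound from maximality
  have hlow : (μ j)⁻¹ ≤ z ⬝ᵥ A⁻¹.mulVec z := by
    have hfeas : Real.sqrt (p j ⬝ᵥ p j) ≤ 1 := by rw [hpnorm j, Real.sqrt_one]
    have := hzmax (p j) hfeas
    rwa [hinv j, dotProduct_smul, smul_eq_mul, hpnorm j, mul_one] at this
  -- upper bound
  have hterm : ∀ i, (μ i)⁻¹ * (z ⬝ᵥ p i) ^ 2 ≤ (μ j)⁻¹ * (z ⬝ᵥ p i) ^ 2 := fun i =>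
    mul_le_mul_of_nonneg_right
      (one_div (μ i) ▸ one_div (μ j) ▸ one_div_le_one_div_of_le (hμpos j) (hj i)) (sq_nonneg _)
  have hup : z ⬝ᵥ A⁻¹.mulVec z ≤ (μ j)⁻¹ * (z ⬝ᵥ z) := by
    rw [hq, hn, Finset.mul_sum]
    exact Finset.sum_le_sum fun i _ => hterm i
  have hμjinv : 0 < (μ j)⁻¹ := inv_pos.mpr (hμpos j)
  have hS1 : z ⬝ᵥ z = 1 := by nlinarith
  have hT : z ⬝ᵥ A⁻¹.mulVec z = (μ j)⁻¹ := by nlinarith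
  -- each term equality
  have hzero : ∀ i ∈ Finset.univ, ((μ j)⁻¹ - (μ i)⁻¹) * (z ⬝ᵥ p i) ^ 2 = 0 := by
    have hsum : ∑ i, ((μ j)⁻¹ - (μ i)⁻¹) * (z ⬝ᵥ p i) ^ 2 = 0 := by
      have : ∑ i, ((μ j)⁻¹ - (μ i)⁻¹) * (z ⬝ᵥ p i) ^ 2
          = (μ j)⁻¹ * (z ⬝ᵥ z) - z ⬝ᵥ A⁻¹.mulVec z := by
        rw [hq, hn, Finset.mul_sum, ← Finset.sum_sub_distrib]
        exact Finset.sum_congr rfl fun i _ => by ring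
      rw [this, hS1, hT]; ring
    refine (Finset.sum_eq_zero_iff_of_nonneg fun i _ => mul_nonneg ?_ (sq_nonneg _)).mp hsum
    have h5 := one_div_le_one_div_of_le (hμpos j) (hj i)
    simp only [one_div] at h5
    linarith
  have hkey : ∀ i, (z ⬝ᵥ p i) * μ i = (z ⬝ᵥ p i) * μ j := by
    intro i
    rcases mul_eq_zero.mp (hzero i (Finset.mem_univ i)) with h | h
    · have h6 : μ j = μ i := inv_inj.mp (by linarith)
      rw [h6]
    · have : z ⬝ᵥ p i = 0 := by
        have := sq_eq_zero_iff.mp h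
        exact this
      rw [this]; ring
  constructor
  · have hz := aux_expand_eq p hp z
    calc A.mulVec z = A.mulVec (∑ i, (z ⬝ᵥ p i) • p i) := by rw [← hz]
      _ = ∑ i, (z ⬝ᵥ p i) • (μ i • p i) := by
          rw [aux_mulVec_sum]
          exact Finset.sum_congr rfl fun i _ => by rw [mulVec_smul, heig]
      _ = μ j • ∑ i, (z ⬝ᵥ p i) • p i := by
          rw [Finset.smul_sum]
          refine Finset.sum_congr rfl fun i _ => ?_
          rw [smul_smul, smul_smul, mul_comm (μ j), hkey i]
      _ = μ j • z := by rw [← hz]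
  · exact hS1


end Stmt2Aux

/-- The smallest eigenvalue of a symmetric matrix, as the infimum of the Rayleigh
quotient over the Euclidean unit sphere. -/
noncomputable def lamMin {d : ℕ} (A : Matrix (Fin d) (Fin d) ℝ) : ℝ :=
  sInf { r : ℝ | ∃ v : Fin d → ℝ, v ⬝ᵥ v = 1 ∧ r = v ⬝ᵥ A.mulVec v }

/-- Multi-step greedy update.  `M` is symmetric positive definite with
sorted eigenvalues `lam` (0-indexed: `lam ⟨0,_⟩ = λ₁`) and orthonormal eigenvectors
`q`.  If for some `s ∈ {1,…,d−1}` we have `λ_{s+1}(M) ≥ λ₁(M) + 1`, then after `s`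
greedy rank-one updates — each adding `zₜzₜᵀ` where `zₜ` maximizes
`z ↦ zᵀ(M⁽ᵗ⁻¹⁾)⁻¹z` over the unit ball — the smallest eigenvalue satisfies
`λ_min(M⁽ˢ⁾) ≥ λ_min(M) + 1`. -/
theorem stmt2 {d : ℕ} (hd : 0 < d)
    (M : Matrix (Fin d) (Fin d) ℝ) (hM : M.PosDef)
    (lam : Fin d → ℝ) (q : Fin d → (Fin d → ℝ))
    (hmono : Monotone lam)
    (heig : ∀ i, M.mulVec (q i) = lam i • q i)
    (horth : ∀ i j, q i ⬝ᵥ q j = if i = j then (1 : ℝ) else 0)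
    (s : ℕ) (hs1 : 1 ≤ s) (hsd : s < d)
    (hgap : lam ⟨s, hsd⟩ ≥ lam ⟨0, hd⟩ + 1)
    (Mseq : ℕ → Matrix (Fin d) (Fin d) ℝ)
    (z : ℕ → Fin d → ℝ)
    (hM0 : Mseq 0 = M)
    (hrec : ∀ t, Mseq (t + 1) = Mseq t + vecMulVec (z (t + 1)) (z (t + 1)))
    (hz_ball : ∀ t, Real.sqrt (z (t + 1) ⬝ᵥ z (t + 1)) ≤ 1)
    (hz_max : ∀ t, ∀ w : Fin d → ℝ, Real.sqrt (w ⬝ᵥ w) ≤ 1 →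
      w ⬝ᵥ (Mseq t)⁻¹.mulVec w ≤ z (t + 1) ⬝ᵥ (Mseq t)⁻¹.mulVec (z (t + 1))) :
    lamMin (Mseq s) ≥ lamMin M + 1 := by
  set i0 : Fin d := ⟨0, hd⟩ with hi0
  set c : ℝ := lam i0 + 1 with hc
  -- basic facts about the sequence
  have hMherm : ∀ t, (Mseq t).IsHermitian := by
    intro t; induction t with
    | zero => rw [hM0]; exact hM.isHermitian
    | succ t ih => rw [hrec]; exact ih.add (aux_vecMulVec_herm _)
  have hMpos : ∀ t, (Mseq t).PosDef := by
    intro t; induction t with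
    | zero => rw [hM0]; exact hM
    | succ t ih => rw [hrec]; exact ih.add_posSemidef (aux_vecMulVec_psd _)
  have hstep : ∀ t (v : Fin d → ℝ),
      v ⬝ᵥ (Mseq t).mulVec v ≤ v ⬝ᵥ (Mseq (t + 1)).mulVec v := by
    intro t v
    rw [hrec, add_mulVec, dotProduct_add, aux_vecMulVec_mulVec, dotProduct_smul, smul_eq_mul]
    rw [dotProduct_comm v (z (t + 1))]
    nlinarith [mul_self_nonneg (z (t + 1) ⬝ᵥ v)]
  have hMmono : ∀ t (v : Fin d → ℝ),
      v ⬝ᵥ M.mulVec v ≤ v ⬝ᵥ (Mseq t).mulVec v := by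
    intro t; induction t with
    | zero => intro v; rw [hM0]
    | succ t ih => intro v; exact le_trans (ih v) (hstep t v)
  have hlam0le : ∀ i, lam i0 ≤ lam i := fun i => hmono (Fin.le_def.mpr (Nat.zero_le _))
  have hMlow : ∀ v : Fin d → ℝ, lam i0 * (v ⬝ᵥ v) ≤ v ⬝ᵥ M.mulVec v :=
    fun v => aux_quad_ge M lam q heig horth (lam i0) hlam0le v
  -- main invariant
  have key : ∀ t, t ≤ s → ∃ (F : Finset (Fin d)) (e : Fin d → Fin d → ℝ) (ν : Fin d → ℝ),
      d - (s - t) ≤ F.card ∧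
      (∀ i ∈ F, (Mseq t).mulVec (e i) = ν i • e i) ∧
      (∀ i ∈ F, c ≤ ν i) ∧
      (∀ i ∈ F, ∀ j ∈ F, e i ⬝ᵥ e j = if i = j then (1 : ℝ) else 0) := by
    intro t
    induction t with
    | zero =>
      intro _
      refine ⟨Finset.Ici (⟨s, hsd⟩ : Fin d), q, lam, ?_, ?_, ?_, ?_⟩
      · rw [Fin.card_Ici]
        have hv : ((⟨s, hsd⟩ : Fin d) : ℕ) = s := rfl
        rw [hv]
        omega
      · intro i _; rw [hM0]; exact heig i
      · intro i hi
        have h1 : (⟨s, hsd⟩ : Fin d) ≤ i := Finset.mem_Ici.mp hi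
        exact le_trans hgap (hmono h1)
      · intro i _ j _; exact horth i j
    | succ t ih =>
      intro hts
      have ht : t ≤ s := le_of_lt (Nat.lt_of_succ_le hts)
      obtain ⟨F, e, ν, hcard, heigF, hνF, horthF⟩ := ih ht
      obtain ⟨μ, p, heigp, horthp⟩ := aux_exists_eigen (Mseq t) (hMherm t)
      obtain ⟨j, _, hjmin⟩ := Finset.exists_min_image Finset.univ μ ⟨i0, Finset.mem_univ _⟩
      have hj' : ∀ i, μ j ≤ μ i := fun i => hjmin i (Finset.mem_univ i)
      have hAT : (Mseq t)ᵀ = Mseq t := by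
        have h := hMherm t
        ext a b
        have h2 := congrFun (congrFun h a) b
        simpa [conjTranspose_apply] using h2
      by_cases hcase : c ≤ μ j
      · -- the smallest eigenvalue is already ≥ c : take a full eigenbasis of Mseq (t+1)
        obtain ⟨μ', p', heigp', horthp'⟩ := aux_exists_eigen (Mseq (t + 1)) (hMherm (t + 1))
        refine ⟨Finset.univ, p', μ', ?_, fun i _ => heigp' i, ?_, fun i _ k _ => horthp' i k⟩
        · simp only [Finset.card_univ, Fintype.card_fin]
          exact Nat.sub_le d _
        · intro i _
          have hnorm : p' i ⬝ᵥ p' i = 1 := by simpa using horthp' i i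
          have hval : p' i ⬝ᵥ (Mseq (t + 1)).mulVec (p' i) = μ' i := by
            rw [heigp' i, dotProduct_smul, smul_eq_mul, hnorm, mul_one]
          have hge : μ j * (p' i ⬝ᵥ p' i) ≤ p' i ⬝ᵥ (Mseq t).mulVec (p' i) :=
            aux_quad_ge (Mseq t) μ p heigp horthp (μ j) hj' (p' i)
          rw [hnorm, mul_one] at hge
          have h3 := hstep t (p' i)
          rw [hval] at h3
          linarith
      · -- the smallest eigenvalue is < c : greedy direction is a min-eigenvector
        push_neg at hcase
        obtain ⟨hAz, hznorm⟩ := aux_greedy_eigen (Mseq t) (hMpos t) μ p heigp horthp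
          j hj' (z (t + 1)) (hz_ball t) (hz_max t)
        have hpnormj : p j ⬝ᵥ p j = 1 := by simpa using horthp j j
        have hμjval : p j ⬝ᵥ (Mseq t).mulVec (p j) = μ j := by
          rw [heigp j, dotProduct_smul, smul_eq_mul, hpnormj, mul_one]
        have hmuj_low : lam i0 ≤ μ j := by
          have h1 := hMlow (p j)
          have h2 := hMmono t (p j)
          rw [hpnormj, mul_one] at h1
          rw [hμjval] at h2
          linarith
        have hFne : F ≠ Finset.univ := by
          intro hFu
          have hall : ∀ i, i ∈ F := fun i => hFu ▸ Finset.mem_univ i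
          have hgeq : c * (p j ⬝ᵥ p j) ≤ p j ⬝ᵥ (Mseq t).mulVec (p j) :=
            aux_quad_ge (Mseq t) ν e (fun i => heigF i (hall i))
              (fun i k => horthF i (hall i) k (hall k)) c (fun i => hνF i (hall i)) (p j)
          rw [hpnormj, mul_one, hμjval] at hgeq
          linarith
        obtain ⟨k, hk⟩ : ∃ k, k ∉ F := by
          by_contra h
          push_neg at h
          exact hFne (Finset.eq_univ_iff_forall.mpr h)
        have hzorth : ∀ i ∈ F, z (t + 1) ⬝ᵥ e i = 0 := by
          intro i hi
          refine aux_orth_of_ne (Mseq t) hAT (z (t + 1)) (e i) (μ j) (ν i) hAz (heigF i hi) ?_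
          intro hh
          have := hνF i hi
          rw [← hh] at this
          linarith
        refine ⟨insert k F, Function.update e k (z (t + 1)),
          Function.update ν k (μ j + 1), ?_, ?_, ?_, ?_⟩
        · rw [Finset.card_insert_of_notMem hk]
          omega
        · intro i hi
          rcases Finset.mem_insert.mp hi with hik | hiF
          · rw [hik, Function.update_self, Function.update_self, hrec, add_mulVec, hAz,
              aux_vecMulVec_mulVec, hznorm, add_smul, one_smul]
          · have hik : i ≠ k := ne_of_mem_of_not_mem hiF hk
            rw [Function.update_of_ne hik, Function.update_of_ne hik, hrec, add_mulVec,
              heigF i hiF, aux_vecMulVec_mulVec, hzorth i hiF, zero_smul, add_zero]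
        · intro i hi
          rcases Finset.mem_insert.mp hi with hik | hiF
          · rw [hik, Function.update_self]; rw [hc]; linarith
          · rw [Function.update_of_ne (ne_of_mem_of_not_mem hiF hk)]
            exact hνF i hiF
        · intro i hi l hl
          rcases Finset.mem_insert.mp hi with hik | hiF <;>
            rcases Finset.mem_insert.mp hl with hlk | hlF
          · rw [hik, hlk]
            simp [Function.update_self, hznorm]
          · have hlk2 : l ≠ k := ne_of_mem_of_not_mem hlF hk
            rw [hik, Function.update_self, Function.update_of_ne hlk2,
              if_neg (Ne.symm hlk2), hzorth l hlF]
          · have hik2 : i ≠ k := ne_of_mem_of_not_mem hiF hk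
            rw [hlk, Function.update_of_ne hik2, Function.update_self, if_neg hik2,
              dotProduct_comm]
            exact hzorth i hiF
          · have hik2 : i ≠ k := ne_of_mem_of_not_mem hiF hk
            have hlk2 : l ≠ k := ne_of_mem_of_not_mem hlF hk
            rw [Function.update_of_ne hik2, Function.update_of_ne hlk2]
            exact horthF i hiF l hlF
  -- conclusion
  obtain ⟨F, e, ν, hcard, heigF, hνF, horthF⟩ := key s (le_refl s)
  have hFuniv : F = Finset.univ := by
    apply Finset.eq_univ_of_card
    have h1 : F.card ≤ Fintype.card (Fin d) := Finset.card_le_univ F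
    simp only [Fintype.card_fin] at h1 ⊢
    omega
  have hall : ∀ i, i ∈ F := fun i => hFuniv ▸ Finset.mem_univ i
  have hfinal : ∀ v : Fin d → ℝ, v ⬝ᵥ v = 1 → c ≤ v ⬝ᵥ (Mseq s).mulVec v := by
    intro v hv
    have h1 := aux_quad_ge (Mseq s) ν e (fun i => heigF i (hall i))
      (fun i k => horthF i (hall i) k (hall k)) c (fun i => hνF i (hall i)) v
    rwa [hv, mul_one] at h1
  have hq0 : q i0 ⬝ᵥ q i0 = 1 := by simpa using horth i0 i0
  have h1 : lamMin M ≤ lam i0 := by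
    apply csInf_le
    · refine ⟨lam i0, ?_⟩
      rintro r ⟨v, hv1, rfl⟩
      have := hMlow v
      rw [hv1, mul_one] at this
      exact this
    · exact ⟨q i0, hq0, by rw [heig, dotProduct_smul, smul_eq_mul, hq0, mul_one]⟩
  have h2 : c ≤ lamMin (Mseq s) := by
    apply le_csInf
    · exact ⟨q i0 ⬝ᵥ (Mseq s).mulVec (q i0), q i0, hq0, rfl⟩
    · rintro r ⟨v, hv1, rfl⟩
      exact hfinal v hv1
  rw [ge_iff_le]
  rw [hc] at h2
  linarith
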